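/- The Abel differential equation dy/dx = p(x)y² + q(x)y³ with p(x) = 40x⁴ - 30x² + 2 and q(x) = 75x⁹ - 150x⁷ + 88x⁵ - 10x³ - 3x has a center on [-1,1]: there exists ε > 0 such that for every initial value y₀ with |y₀| < ε, the solution y with y(-1) = y₀ is defined on all of [-1,1] and satisfies y(1) = y₀. -/

import Mathlib

open MeasureTheory Set
open scoped NNReal

set_option maxHeartbeats 1000000

noncomputable def p (x : ℝ) : ℝ := 40*x^4 - 30*x^2 + 2
noncomputable def q (x : ℝ) : ℝ := 75*x^9 - 150*x^7 + 88*x^5 - 10*x^3 - 3*x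

/-! Auxiliary definitions: the rational first integral
`H(x,y) = y² f₁(x,y)³ / f₂(x,y)⁴` with `f₁ = 1 + A1 x * y + A2 x * y²`,
`f₂ = 1 + B1 x * y + B2 x * y²`, and a clamped vector field used for existence. -/

noncomputable def A1 (x : ℝ) : ℝ := 4*x - 12*x^3 + 8*x^5
noncomputable def A2 (x : ℝ) : ℝ := 1/2 + x^2 - 17*x^4 + 44*x^6 - (87/2)*x^8 + 15*x^10
noncomputable def B1 (x : ℝ) : ℝ := 4*x - 14*x^3 + 10*x^5
noncomputable def B2 (x : ℝ) : ℝ := 2/3 + x^2 - 24*x^4 + (202/3)*x^6 - 70*x^8 + 25*x^10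
noncomputable def F1 (y : ℝ → ℝ) (t : ℝ) : ℝ := 1 + A1 t * y t + A2 t * (y t)^2
noncomputable def F2 (y : ℝ → ℝ) (t : ℝ) : ℝ := 1 + B1 t * y t + B2 t * (y t)^2
noncomputable def HH (y : ℝ → ℝ) (t : ℝ) : ℝ := (y t)^2 * (F1 y t)^3 / (F2 y t)^4

noncomputable def cl (z : ℝ) : ℝ := max (-(1/1000)) (min (1/1000) z)
noncomputable def W (t z : ℝ) : ℝ := p t * cl z ^ 2 + q t * cl z ^ 3

lemma abs_cl_le (z : ℝ) : |cl z| ≤ 1/1000 := by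
  rw [abs_le]
  constructor
  · exact le_max_left _ _
  · exact max_le (by norm_num) ((min_le_left _ _))

lemma cl_eq_self {z : ℝ} (h : |z| ≤ 1/1000) : cl z = z := by
  rw [abs_le] at h
  rw [cl, min_eq_right h.2, max_eq_right h.1]

lemma cl_zero : cl 0 = 0 := cl_eq_self (by norm_num)

lemma cl_lip (z w : ℝ) : |cl z - cl w| ≤ |z - w| := by
  rw [cl, cl, max_comm (-(1/1000)) _, max_comm (-(1/1000)) _]
  refine (abs_max_sub_max_le_abs _ _ _).trans ?_
  refine (abs_min_sub_min_le_max (1/1000) z (1/1000) w).trans ?_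
  simp

lemma p_bound {t : ℝ} (h : t ∈ Icc (-(3/2) : ℝ) (3/2)) : |p t| ≤ 272 := by
  obtain ⟨h1, h2⟩ := h
  have ht2 : t^2 ≤ 9/4 := by nlinarith
  rw [abs_le, p]
  constructor <;> nlinarith [sq_nonneg t, sq_nonneg (t^2), sq_nonneg (t^2 - 9/4)]

lemma q_bound {t : ℝ} (h : t ∈ Icc (-(3/2) : ℝ) (3/2)) : |q t| ≤ 6153 := by
  obtain ⟨h1, h2⟩ := h
  have ha : |t| ≤ 3/2 := abs_le.mpr ⟨by linarith, h2⟩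
  have h0 := abs_nonneg t
  have h9 : |t|^9 ≤ (3/2:ℝ)^9 := pow_le_pow_left₀ h0 ha 9
  have h7 : |t|^7 ≤ (3/2:ℝ)^7 := pow_le_pow_left₀ h0 ha 7
  have h5 : |t|^5 ≤ (3/2:ℝ)^5 := pow_le_pow_left₀ h0 ha 5
  have h3 : |t|^3 ≤ (3/2:ℝ)^3 := pow_le_pow_left₀ h0 ha 3
  have e9 : |t^9| = |t|^9 := abs_pow t 9
  have e7 : |t^7| = |t|^7 := abs_pow t 7
  have e5 : |t^5| = |t|^5 := abs_pow t 5
  have e3 : |t^3| = |t|^3 := abs_pow t 3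
  have l9 := le_abs_self (t^9); have m9 := neg_abs_le (t^9)
  have l7 := le_abs_self (t^7); have m7 := neg_abs_le (t^7)
  have l5 := le_abs_self (t^5); have m5 := neg_abs_le (t^5)
  have l3 := le_abs_self (t^3); have m3 := neg_abs_le (t^3)
  have lt := le_abs_self t; have mt := neg_abs_le t
  rw [abs_le, q]
  constructor <;> nlinarith

lemma W_zero (t : ℝ) : W t 0 = 0 := by simp [W, cl_zero]

lemma W_lip {t : ℝ} (ht : t ∈ Icc (-(3/2) : ℝ) (3/2)) : LipschitzWith 1 (W t) := by
  refine LipschitzWith.of_dist_le_mul fun z w => ?_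
  rw [Real.dist_eq, Real.dist_eq, NNReal.coe_one, one_mul]
  set u := cl z
  set v := cl w
  have hu : |u| ≤ 1/1000 := abs_cl_le z
  have hv : |v| ≤ 1/1000 := abs_cl_le w
  have hd : |u - v| ≤ |z - w| := cl_lip z w
  have hp := p_bound ht
  have hq := q_bound ht
  have key : W t z - W t w = (u - v) * (p t * (u + v) + q t * (u^2 + u*v + v^2)) := by
    rw [W, W]; ring
  rw [key, abs_mul]
  have hfac : |p t * (u + v) + q t * (u^2 + u*v + v^2)| ≤ 1 := by
    have h1 : |p t * (u + v)| ≤ 272 * (2/1000) := by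
      rw [abs_mul]
      have : |u + v| ≤ 2/1000 := (abs_add_le u v).trans (by linarith)
      exact mul_le_mul hp this (abs_nonneg _) (by norm_num)
    have h2 : |q t * (u^2 + u*v + v^2)| ≤ 6153 * (3/1000000) := by
      rw [abs_mul]
      have huv : |u*v| ≤ 1/1000000 := by
        rw [abs_mul]
        nlinarith [abs_nonneg u, abs_nonneg v]
      have hu2 : |u^2| ≤ 1/1000000 := by
        rw [abs_pow]; nlinarith [abs_nonneg u]
      have hv2 : |v^2| ≤ 1/1000000 := by
        rw [abs_pow]; nlinarith [abs_nonneg v]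
      have : |u^2 + u*v + v^2| ≤ 3/1000000 :=
        (abs_add_le _ _).trans (by have := (abs_add_le (u^2) (u*v)); linarith)
      exact mul_le_mul hq this (abs_nonneg _) (by norm_num)
    calc |p t * (u + v) + q t * (u^2 + u*v + v^2)|
        ≤ |p t * (u + v)| + |q t * (u^2 + u*v + v^2)| := abs_add_le _ _
      _ ≤ 1 := by linarith
  calc |u - v| * |p t * (u + v) + q t * (u^2 + u*v + v^2)|
      ≤ |u - v| * 1 := mul_le_mul_of_nonneg_left hfac (abs_nonneg _)
    _ = |u - v| := mul_one _
    _ ≤ |z - w| := hd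

lemma W_bound {t : ℝ} (ht : t ∈ Icc (-(3/2) : ℝ) (3/2)) (z : ℝ) : |W t z| ≤ 1/100 := by
  have hu : |cl z| ≤ 1/1000 := abs_cl_le z
  have hp := p_bound ht
  have hq := q_bound ht
  have h1 : |p t * cl z ^ 2| ≤ 272 * (1/1000000) := by
    rw [abs_mul, abs_pow]
    nlinarith [abs_nonneg (p t), abs_nonneg (cl z)]
  have h2 : |q t * cl z ^ 3| ≤ 6153 * (1/1000000000) := by
    rw [abs_mul, abs_pow]
    nlinarith [abs_nonneg (q t), abs_nonneg (cl z), pow_le_pow_left₀ (abs_nonneg (cl z)) hu 3]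
  calc |W t z| ≤ |p t * cl z ^ 2| + |q t * cl z ^ 3| := abs_add_le _ _
    _ ≤ 1/100 := by linarith

lemma p_bound1 {t : ℝ} (h : t ∈ Icc (-1 : ℝ) 1) : |p t| ≤ 72 := by
  obtain ⟨h1, h2⟩ := h
  have ht2 : t^2 ≤ 1 := by nlinarith
  rw [abs_le, p]
  constructor <;> nlinarith [sq_nonneg t, sq_nonneg (t^2), sq_nonneg (t^2 - 1)]

lemma q_bound1 {t : ℝ} (h : t ∈ Icc (-1 : ℝ) 1) : |q t| ≤ 326 := by
  obtain ⟨h1, h2⟩ := h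
  have ha : |t| ≤ 1 := abs_le.mpr ⟨by linarith, h2⟩
  have h0 := abs_nonneg t
  have h9 : |t|^9 ≤ 1 := pow_le_one₀ h0 ha
  have h7 : |t|^7 ≤ 1 := pow_le_one₀ h0 ha
  have h5 : |t|^5 ≤ 1 := pow_le_one₀ h0 ha
  have h3 : |t|^3 ≤ 1 := pow_le_one₀ h0 ha
  have e9 : |t^9| = |t|^9 := abs_pow t 9
  have e7 : |t^7| = |t|^7 := abs_pow t 7
  have e5 : |t^5| = |t|^5 := abs_pow t 5
  have e3 : |t^3| = |t|^3 := abs_pow t 3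
  have l9 := le_abs_self (t^9); have m9 := neg_abs_le (t^9)
  have l7 := le_abs_self (t^7); have m7 := neg_abs_le (t^7)
  have l5 := le_abs_self (t^5); have m5 := neg_abs_le (t^5)
  have l3 := le_abs_self (t^3); have m3 := neg_abs_le (t^3)
  have lt := le_abs_self t; have mt := neg_abs_le t
  rw [abs_le, q]
  constructor <;> nlinarith

lemma B1_bound {x : ℝ} (h : x ∈ Icc (-1 : ℝ) 1) : |B1 x| ≤ 28 := by
  obtain ⟨h1, h2⟩ := h
  have ha : |x| ≤ 1 := abs_le.mpr ⟨by linarith, h2⟩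
  have h0 := abs_nonneg x
  have h5 : |x|^5 ≤ 1 := pow_le_one₀ h0 ha
  have h3 : |x|^3 ≤ 1 := pow_le_one₀ h0 ha
  have e5 : |x^5| = |x|^5 := abs_pow x 5
  have e3 : |x^3| = |x|^3 := abs_pow x 3
  have l5 := le_abs_self (x^5); have m5 := neg_abs_le (x^5)
  have l3 := le_abs_self (x^3); have m3 := neg_abs_le (x^3)
  have lt := le_abs_self x; have mt := neg_abs_le x
  rw [abs_le, B1]
  constructor <;> nlinarith

lemma B2_bound {x : ℝ} (h : x ∈ Icc (-1 : ℝ) 1) : |B2 x| ≤ 189 := by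
  obtain ⟨h1, h2⟩ := h
  have ha : |x| ≤ 1 := abs_le.mpr ⟨by linarith, h2⟩
  have h0 := abs_nonneg x
  have h10 : |x|^10 ≤ 1 := pow_le_one₀ h0 ha
  have h8 : |x|^8 ≤ 1 := pow_le_one₀ h0 ha
  have h6 : |x|^6 ≤ 1 := pow_le_one₀ h0 ha
  have h4 : |x|^4 ≤ 1 := pow_le_one₀ h0 ha
  have h2' : |x|^2 ≤ 1 := pow_le_one₀ h0 ha
  have e10 : |x^10| = |x|^10 := abs_pow x 10
  have e8 : |x^8| = |x|^8 := abs_pow x 8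
  have e6 : |x^6| = |x|^6 := abs_pow x 6
  have e4 : |x^4| = |x|^4 := abs_pow x 4
  have e2 : |x^2| = |x|^2 := abs_pow x 2
  have l10 := le_abs_self (x^10); have m10 := neg_abs_le (x^10)
  have l8 := le_abs_self (x^8); have m8 := neg_abs_le (x^8)
  have l6 := le_abs_self (x^6); have m6 := neg_abs_le (x^6)
  have l4 := le_abs_self (x^4); have m4 := neg_abs_le (x^4)
  have l2 := le_abs_self (x^2); have m2 := neg_abs_le (x^2)
  rw [abs_le, B2]
  constructor <;> nlinarith

lemma hasDerivAt_A1 (x : ℝ) : HasDerivAt A1 (4 - 36*x^2 + 40*x^4) x := by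
  have h := (((hasDerivAt_id x).const_mul (4:ℝ)).sub ((hasDerivAt_pow 3 x).const_mul 12)).add
    ((hasDerivAt_pow 5 x).const_mul 8)
  refine h.congr_deriv ?_
  push_cast; ring
lemma hasDerivAt_A2 (x : ℝ) :
    HasDerivAt A2 (2*x - 68*x^3 + 264*x^5 - 348*x^7 + 150*x^9) x := by
  have h := (((((hasDerivAt_const x (1/2:ℝ)).add (hasDerivAt_pow 2 x)).sub
    ((hasDerivAt_pow 4 x).const_mul 17)).add ((hasDerivAt_pow 6 x).const_mul 44)).sub
    ((hasDerivAt_pow 8 x).const_mul (87/2))).add ((hasDerivAt_pow 10 x).const_mul 15)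
  refine h.congr_deriv ?_
  push_cast; ring
lemma hasDerivAt_B1 (x : ℝ) : HasDerivAt B1 (4 - 42*x^2 + 50*x^4) x := by
  have h := (((hasDerivAt_id x).const_mul (4:ℝ)).sub ((hasDerivAt_pow 3 x).const_mul 14)).add
    ((hasDerivAt_pow 5 x).const_mul 10)
  refine h.congr_deriv ?_
  push_cast; ring
lemma hasDerivAt_B2 (x : ℝ) :
    HasDerivAt B2 (2*x - 96*x^3 + 404*x^5 - 560*x^7 + 250*x^9) x := by
  have h := (((((hasDerivAt_const x (2/3:ℝ)).add (hasDerivAt_pow 2 x)).sub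
    ((hasDerivAt_pow 4 x).const_mul 24)).add ((hasDerivAt_pow 6 x).const_mul (202/3))).sub
    ((hasDerivAt_pow 8 x).const_mul 70)).add ((hasDerivAt_pow 10 x).const_mul 25)
  refine h.congr_deriv ?_
  push_cast; ring

lemma key_identity (x Y : ℝ) :
    ((2*Y*(p x*Y^2+q x*Y^3))*(1+A1 x*Y+A2 x*Y^2)
      + 3*Y^2*((4 - 36*x^2 + 40*x^4)*Y + A1 x*(p x*Y^2+q x*Y^3)
        + ((2*x - 68*x^3 + 264*x^5 - 348*x^7 + 150*x^9)*Y^2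
        + A2 x*(2*Y*(p x*Y^2+q x*Y^3))))) * (1+B1 x*Y+B2 x*Y^2)
    - 4*Y^2*(1+A1 x*Y+A2 x*Y^2)*((4 - 42*x^2 + 50*x^4)*Y + B1 x*(p x*Y^2+q x*Y^3)
        + ((2*x - 96*x^3 + 404*x^5 - 560*x^7 + 250*x^9)*Y^2
        + B2 x*(2*Y*(p x*Y^2+q x*Y^3)))) = 0 := by
  simp only [p, q, A1, A2, B1, B2]
  ring

lemma hasDerivAt_HH {y : ℝ → ℝ} {x : ℝ}
    (hy : HasDerivAt y (p x * (y x)^2 + q x * (y x)^3) x)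
    (h2 : F2 y x ≠ 0) :
    HasDerivAt (HH y) 0 x := by
  set Y := y x with hY
  set dY := p x * Y^2 + q x * Y^3 with hdY
  have hF1 : HasDerivAt (F1 y)
      ((4 - 36*x^2 + 40*x^4)*Y + A1 x*dY
        + ((2*x - 68*x^3 + 264*x^5 - 348*x^7 + 150*x^9)*Y^2 + A2 x*(2*Y*dY))) x := by
    have h := (hasDerivAt_const x (1:ℝ)).add
      (((hasDerivAt_A1 x).mul hy).add ((hasDerivAt_A2 x).mul (hy.pow 2)))
    convert h using 1
    · rfl
    · rfl
    · funext t; simp only [F1, Pi.add_apply, Pi.mul_apply, Pi.pow_apply]; ring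
    · simp only [Pi.pow_apply, ← hY]; push_cast; ring
  have hF2 : HasDerivAt (F2 y)
      ((4 - 42*x^2 + 50*x^4)*Y + B1 x*dY
        + ((2*x - 96*x^3 + 404*x^5 - 560*x^7 + 250*x^9)*Y^2 + B2 x*(2*Y*dY))) x := by
    have h := (hasDerivAt_const x (1:ℝ)).add
      (((hasDerivAt_B1 x).mul hy).add ((hasDerivAt_B2 x).mul (hy.pow 2)))
    convert h using 1
    · rfl
    · rfl
    · funext t; simp only [F2, Pi.add_apply, Pi.mul_apply, Pi.pow_apply]; ring
    · simp only [Pi.pow_apply, ← hY]; push_cast; ring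
  set dF1 := (4 - 36*x^2 + 40*x^4)*Y + A1 x*dY
        + ((2*x - 68*x^3 + 264*x^5 - 348*x^7 + 150*x^9)*Y^2 + A2 x*(2*Y*dY)) with hdF1
  set dF2 := (4 - 42*x^2 + 50*x^4)*Y + B1 x*dY
        + ((2*x - 96*x^3 + 404*x^5 - 560*x^7 + 250*x^9)*Y^2 + B2 x*(2*Y*dY)) with hdF2
  have hN : HasDerivAt (fun t => (y t)^2 * (F1 y t)^3)
      ((2*Y*dY)*(F1 y x)^3 + Y^2*(3*(F1 y x)^2*dF1)) x := by
    have h := (hy.pow 2).mul (hF1.pow 3)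
    convert h using 1
    · rfl
    · rfl
    · rfl
    · simp only [Pi.pow_apply, ← hY]; push_cast; ring
  have hD : HasDerivAt (fun t => (F2 y t)^4) (4*(F2 y x)^3*dF2) x := by
    have h := hF2.pow 4
    convert h using 1
    · rfl
    · rfl
    · rfl
    · push_cast; ring
  have hG := hN.div hD (pow_ne_zero 4 h2)
  have hzero : (((2*Y*dY)*(F1 y x)^3 + Y^2*(3*(F1 y x)^2*dF1)) * (F2 y x)^4
      - (y x)^2 * (F1 y x)^3 * (4*(F2 y x)^3*dF2)) / ((F2 y x)^4)^2 = 0 := by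
    have hnum : ((2*Y*dY)*(F1 y x)^3 + Y^2*(3*(F1 y x)^2*dF1)) * (F2 y x)^4
        - (y x)^2 * (F1 y x)^3 * (4*(F2 y x)^3*dF2)
        = (F1 y x)^2 * (F2 y x)^3 *
          (((2*Y*dY)*(F1 y x) + 3*Y^2*dF1) * (F2 y x) - 4*Y^2*(F1 y x)*dF2) := by
      rw [← hY]; ring
    have hkey : ((2*Y*dY)*(F1 y x) + 3*Y^2*dF1) * (F2 y x) - 4*Y^2*(F1 y x)*dF2 = 0 := by
      simp only [hdF1, hdF2, hdY, F1, F2, ← hY]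
      exact key_identity x Y
    rw [hnum, hkey, mul_zero, zero_div]
  have : HH y = fun t => (y t)^2 * (F1 y t)^3 / (F2 y t)^4 := rfl
  rw [this]
  exact hzero ▸ hG

theorem abel_equation_has_center :
    ∃ ε > (0:ℝ), ∀ y₀ : ℝ, |y₀| < ε →
      (∃ y : ℝ → ℝ, y (-1) = y₀ ∧
        (∀ x ∈ Icc (-1:ℝ) 1, HasDerivAt y (p x * (y x)^2 + q x * (y x)^3) x) ∧
        y 1 = y₀) ∧
      (∀ y : ℝ → ℝ, y (-1) = y₀ →
        (∀ x ∈ Icc (-1:ℝ) 1, HasDerivAt y (p x * (y x)^2 + q x * (y x)^3) x) →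
        y 1 = y₀) := by
  refine ⟨1/21000, by norm_num, fun y₀ hy₀ => ?_⟩
  -- Picard–Lindelöf existence for the clamped field `W`
  have hpl : IsPicardLindelof W (tmin := -(3/2)) (tmax := 3/2)
      ⟨-1, by constructor <;> norm_num⟩ y₀ 1 0 (1/100) 1 :=
    { lipschitzOnWith := fun t ht => (W_lip ht).lipschitzOnWith
      continuousOn := fun z _ => by
        have h : Continuous fun t : ℝ => W t z := by
          simp only [W, p, q]; fun_prop
        exact h.continuousOn
      norm_le := fun t ht z _ => by
        rw [Real.norm_eq_abs]; exact W_bound ht z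
      mul_max_le := by norm_num }
  obtain ⟨Y, hY0, hYds⟩ := hpl.exists_eq_forall_mem_Icc_hasDerivWithinAt₀
  replace hY0 : Y (-1) = y₀ := hY0
  have hsub : Icc (-1:ℝ) 1 ⊆ Icc (-(3/2):ℝ) (3/2) :=
    Icc_subset_Icc (by norm_num) (by norm_num)
  have hYd : ∀ x ∈ Icc (-1:ℝ) 1, HasDerivAt Y (W x (Y x)) x := fun x hx =>
    (hYds x (hsub hx)).hasDerivAt
      (Icc_mem_nhds (by linarith [hx.1]) (by linarith [hx.2]))
  have hYc : ContinuousOn Y (Icc (-1:ℝ) 1) := fun x hx =>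
    (hYd x hx).continuousAt.continuousWithinAt
  -- Grönwall comparison with the zero solution: Y stays small
  set s1 : ℝ → Set ℝ := fun t => if t ∈ Icc (-(3/2):ℝ) (3/2) then (univ : Set ℝ) else ∅ with hs1
  have hv1 : ∀ t, LipschitzOnWith 1 (W t) (s1 t) := by
    intro t
    by_cases h : t ∈ Icc (-(3/2):ℝ) (3/2)
    · rw [hs1]; simp only [if_pos h]; exact (W_lip h).lipschitzOnWith
    · rw [hs1]; simp only [if_neg h]; exact lipschitzOnWith_empty _ _
  have hgron : ∀ t ∈ Icc (-1:ℝ) 1,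
      dist (Y t) ((fun _ => (0:ℝ)) t) ≤ |y₀| * Real.exp ((1:ℝ≥0) * (t - (-1))) := by
    refine dist_le_of_trajectories_ODE_of_mem (fun t _ => hv1 t) hYc
      (fun t ht => (hYd t (Ico_subset_Icc_self ht)).hasDerivWithinAt)
      (fun t ht => by
        rw [hs1]; simp only [if_pos (hsub (Ico_subset_Icc_self ht))]; trivial)
      continuousOn_const
      (fun t ht => by simpa [W_zero t] using hasDerivWithinAt_const t (Ici t) (0:ℝ))
      (fun t ht => by
        rw [hs1]; simp only [if_pos (hsub (Ico_subset_Icc_self ht))]; trivial)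
      (by rw [hY0]; simp [Real.dist_eq])
  have hsmall : ∀ t ∈ Icc (-1:ℝ) 1, |Y t| ≤ 1/2000 := by
    intro t ht
    have h := hgron t ht
    rw [Real.dist_eq, sub_zero] at h
    have he : Real.exp ((1:ℝ≥0) * (t - (-1))) ≤ Real.exp 2 := by
      apply Real.exp_le_exp.mpr
      push_cast
      linarith [ht.2]
    have he2 : Real.exp 2 < 7.39 := by
      have h1 := Real.exp_one_lt_d9
      have h2 : Real.exp 2 = Real.exp 1 * Real.exp 1 := by
        rw [← Real.exp_add]; norm_num
      rw [h2]; nlinarith [Real.exp_pos 1]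
    have hy₀' : |y₀| < 1/21000 := hy₀
    nlinarith [abs_nonneg y₀, Real.exp_pos ((1:ℝ≥0) * (t - (-1)))]
  -- Y solves the original Abel equation on [-1,1]
  have hYode : ∀ x ∈ Icc (-1:ℝ) 1, HasDerivAt Y (p x * (Y x)^2 + q x * (Y x)^3) x := by
    intro x hx
    have h := hYd x hx
    rwa [W, cl_eq_self ((hsmall x hx).trans (by norm_num))] at h
  -- the denominator of the first integral never vanishes along Y
  have hF2pos : ∀ x ∈ Icc (-1:ℝ) 1, (0:ℝ) < F2 Y x := by
    intro x hx
    have hb1 := B1_bound hx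
    have hb2 := B2_bound hx
    have hy := hsmall x hx
    have h1 : |B1 x * Y x| ≤ 28 * (1/2000) := by
      rw [abs_mul]; exact mul_le_mul hb1 hy (abs_nonneg _) (by norm_num)
    have h2 : |B2 x * (Y x)^2| ≤ 189 * (1/2000)^2 := by
      rw [abs_mul, abs_pow]
      exact mul_le_mul hb2 (by nlinarith [abs_nonneg (Y x)]) (by positivity) (by norm_num)
    have hn1 := neg_abs_le (B1 x * Y x)
    have hn2 := neg_abs_le (B2 x * (Y x)^2)
    rw [F2]; nlinarith
  -- the first integral is constant along Y
  have hHconst : ∀ x ∈ Icc (-1:ℝ) 1, HH Y x = HH Y (-1) := by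
    apply constant_of_has_deriv_right_zero
    · intro x hx
      exact (hasDerivAt_HH (hYode x hx)
        (ne_of_gt (hF2pos x hx))).continuousAt.continuousWithinAt
    · intro x hx
      exact (hasDerivAt_HH (hYode x (Ico_subset_Icc_self hx))
        (ne_of_gt (hF2pos x (Ico_subset_Icc_self hx)))).hasDerivWithinAt
  have hend : (Y 1)^2 = y₀^2 := by
    have h1 := hHconst 1 (by constructor <;> norm_num)
    have e1 : HH Y 1 = (Y 1)^2 := by
      rw [HH, F1, F2, A1, A2, B1, B2]; norm_num
    have e0 : HH Y (-1) = y₀^2 := by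
      rw [HH, F1, F2, A1, A2, B1, B2, hY0]; norm_num
    rw [e1, e0] at h1; exact h1
  -- Y never vanishes on [-1,1] when y₀ ≠ 0
  have hnozero : y₀ ≠ 0 → ∀ c ∈ Icc (-1:ℝ) 1, Y c ≠ 0 := by
    intro hy0ne c hc hYc0
    have hmem : ∀ t ∈ Ioc (-1:ℝ) c, t ∈ Icc (-1:ℝ) 1 :=
      fun t ht => ⟨le_of_lt ht.1, le_trans ht.2 hc.2⟩
    have huniq := ODE_solution_unique_of_mem_Icc_left (g := fun _ => (0:ℝ)) (fun t _ => hv1 t)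
      (hYc.mono (Icc_subset_Icc le_rfl hc.2))
      (fun t ht => (hYd t (hmem t ht)).hasDerivWithinAt)
      (fun t ht => by
        rw [hs1]; simp only [if_pos (hsub (hmem t ht))]; trivial)
      continuousOn_const
      (fun t ht => by simpa [W_zero t] using hasDerivWithinAt_const t (Iic t) (0:ℝ))
      (fun t ht => by
        rw [hs1]; simp only [if_pos (hsub (hmem t ht))]; trivial)
      (by simpa using hYc0)
    have h := huniq ⟨le_refl (-1), hc.1⟩
    simp only [hY0] at h
    exact hy0ne h
  -- conclude Y 1 = y₀
  have hY1 : Y 1 = y₀ := by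
    have hfac : (Y 1 - y₀) * (Y 1 + y₀) = 0 := by linear_combination hend
    rcases mul_eq_zero.mp hfac with h | h
    · linarith
    · by_cases hy0 : y₀ = 0
      · rw [hy0]; rw [hy0] at h; linarith
      · exfalso
        have hY1v : Y 1 = -y₀ := by linarith
        rcases lt_or_gt_of_ne hy0 with hneg | hpos
        · have h0 : (0:ℝ) ∈ Icc (Y (-1)) (Y 1) := by
            rw [hY0, hY1v]; constructor <;> linarith
          obtain ⟨c, hc, hc0⟩ := intermediate_value_Icc (by norm_num : (-1:ℝ) ≤ 1) hYc h0
          exact hnozero hy0 c hc hc0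
        · have h0 : (0:ℝ) ∈ Icc (Y 1) (Y (-1)) := by
            rw [hY0, hY1v]; constructor <;> linarith
          obtain ⟨c, hc, hc0⟩ := intermediate_value_Icc' (by norm_num : (-1:ℝ) ≤ 1) hYc h0
          exact hnozero hy0 c hc hc0
  refine ⟨⟨Y, hY0, hYode, hY1⟩, ?_⟩
  -- uniqueness: any solution agrees with Y
  intro y hy0' hyode
  have hyc : ContinuousOn y (Icc (-1:ℝ) 1) := fun x hx =>
    (hyode x hx).continuousAt.continuousWithinAt
  obtain ⟨M₀, hM₀⟩ := isCompact_Icc.exists_bound_of_continuousOn hyc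
  set M : ℝ := max M₀ 1 with hM
  have hM1 : (1:ℝ) ≤ M := le_max_right _ _
  have hyM : ∀ t ∈ Icc (-1:ℝ) 1, |y t| ≤ M := fun t ht =>
    le_trans (le_of_eq (Real.norm_eq_abs _).symm) ((hM₀ t ht).trans (le_max_left _ _))
  have hYM : ∀ t ∈ Icc (-1:ℝ) 1, |Y t| ≤ M := fun t ht =>
    (hsmall t ht).trans (by linarith)
  set K : ℝ≥0 := Real.toNNReal (144*M + 978*M^2) with hKdef
  set s2 : ℝ → Set ℝ := fun t => if t ∈ Icc (-1:ℝ) 1 then Metric.closedBall (0:ℝ) M else ∅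
    with hs2
  have hv2 : ∀ t, LipschitzOnWith K (fun z => p t * z^2 + q t * z^3) (s2 t) := by
    intro t
    by_cases h : t ∈ Icc (-1:ℝ) 1
    · rw [hs2]; simp only [if_pos h]
      apply LipschitzOnWith.of_dist_le_mul
      intro z hz w hw
      rw [Metric.mem_closedBall, Real.dist_eq, sub_zero] at hz hw
      rw [Real.dist_eq, Real.dist_eq]
      have hK' : (K:ℝ) = 144*M + 978*M^2 := Real.coe_toNNReal _ (by nlinarith)
      rw [hK']
      have key : (p t * z^2 + q t * z^3) - (p t * w^2 + q t * w^3)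
          = (z - w) * (p t * (z + w) + q t * (z^2 + z*w + w^2)) := by ring
      rw [key, abs_mul]
      have hp := p_bound1 h
      have hq := q_bound1 h
      have hfac : |p t * (z + w) + q t * (z^2 + z*w + w^2)| ≤ 144*M + 978*M^2 := by
        have h1 : |p t * (z + w)| ≤ 72 * (2*M) := by
          rw [abs_mul]
          exact mul_le_mul hp ((abs_add_le z w).trans (by linarith)) (abs_nonneg _) (by norm_num)
        have h2 : |q t * (z^2 + z*w + w^2)| ≤ 326 * (3*M^2) := by
          rw [abs_mul]
          refine mul_le_mul hq ?_ (abs_nonneg _) (by norm_num)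
          have hzw : |z*w| ≤ M^2 := by
            rw [abs_mul]; nlinarith [abs_nonneg z, abs_nonneg w]
          have hz2 : |z^2| ≤ M^2 := by rw [abs_pow]; nlinarith [abs_nonneg z]
          have hw2 : |w^2| ≤ M^2 := by rw [abs_pow]; nlinarith [abs_nonneg w]
          calc |z^2 + z*w + w^2| ≤ |z^2 + z*w| + |w^2| := abs_add_le _ _
            _ ≤ |z^2| + |z*w| + |w^2| := by linarith [abs_add_le (z^2) (z*w)]
            _ ≤ 3*M^2 := by linarith
        calc |p t * (z + w) + q t * (z^2 + z*w + w^2)|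
            ≤ |p t * (z + w)| + |q t * (z^2 + z*w + w^2)| := abs_add_le _ _
          _ ≤ 144*M + 978*M^2 := by nlinarith
      calc |z - w| * |p t * (z + w) + q t * (z^2 + z*w + w^2)|
          ≤ |z - w| * (144*M + 978*M^2) := mul_le_mul_of_nonneg_left hfac (abs_nonneg _)
        _ = (144*M + 978*M^2) * |z - w| := mul_comm _ _
    · rw [hs2]; simp only [if_neg h]; exact lipschitzOnWith_empty _ _
  have heq := ODE_solution_unique_of_mem_Icc_right (fun t _ => hv2 t)
    hyc (fun t ht => (hyode t (Ico_subset_Icc_self ht)).hasDerivWithinAt)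
    (fun t ht => by
      rw [hs2]; simp only [if_pos (Ico_subset_Icc_self ht)]
      rw [Metric.mem_closedBall, Real.dist_eq, sub_zero]
      exact hyM t (Ico_subset_Icc_self ht))
    hYc (fun t ht => (hYode t (Ico_subset_Icc_self ht)).hasDerivWithinAt)
    (fun t ht => by
      rw [hs2]; simp only [if_pos (Ico_subset_Icc_self ht)]
      rw [Metric.mem_closedBall, Real.dist_eq, sub_zero]
      exact hYM t (Ico_subset_Icc_self ht))
    (by rw [hy0', hY0])
  have h1 := heq ⟨by norm_num, le_refl (1:ℝ)⟩
  rw [h1]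
  exact hY1
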